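/- Let K be a field of characteristic different from 2 and not dividing n, containing a primitive n-th root of unity ω, with n odd, and let S = (a,b; n, K, ω) be the symbol algebra generated by x, y with xⁿ = a, yⁿ = b, yx = ωxy, for a, b ∈ K×. Then the trace form T_S(z) = Trd_S(z²) is isometric to ⟨n⟩ ⊥ ((n²-1)/2) × H. -/

import Mathlib

section Aux
variable {K : Type*} [Field K] {S : Type*} [Ring S] [Algebra K S]

lemma aux_y_xpow (ω : K) (x y : S) (hyx : y * x = ω • (x * y)) :
    ∀ k : ℕ, y * x ^ k = ω ^ k • (x ^ k * y) := by
  intro k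
  induction k with
  | zero => simp
  | succ k ih =>
    rw [pow_succ, ← mul_assoc, ih, smul_mul_assoc, mul_assoc, hyx,
      mul_smul_comm, ← mul_assoc, ← pow_succ, smul_smul, ← pow_succ]

lemma aux_ypow_xpow (ω : K) (x y : S) (hyx : y * x = ω • (x * y)) :
    ∀ j k : ℕ, y ^ j * x ^ k = ω ^ (j * k) • (x ^ k * y ^ j) := by
  intro j k
  induction j with
  | zero => simp
  | succ j ih =>
    rw [pow_succ, mul_assoc, aux_y_xpow ω x y hyx, mul_smul_comm, ← mul_assoc, ih,
      smul_mul_assoc, smul_smul, mul_assoc, ← pow_succ, ← pow_add]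
    ring_nf

lemma aux_pow_reduce (a : K) (x : S) (n : ℕ) (hx : x ^ n = algebraMap K S a)
    {i k : ℕ} (hi : i < n) (hk : k < n) :
    x ^ i * x ^ k = (if i + k < n then (1:K) else a) • x ^ ((i + k) % n) := by
  rw [← pow_add]
  split_ifs with h
  · rw [Nat.mod_eq_of_lt h, one_smul]
  · have h2 : i + k = (i + k) % n + n := by
      rw [Nat.mod_eq_sub_mod (le_of_not_gt h), Nat.mod_eq_of_lt (by omega)]
      omega
    rw [h2, pow_add, hx, ← Algebra.commutes a (x ^ ((i+k) % n)), Algebra.smul_def]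
    simp [Nat.add_mod_right, Nat.mod_mod_of_dvd]

end Aux

section Mul
variable {K : Type*} [Field K] {S : Type*} [Ring S] [Algebra K S]
variable (ω a b : K) (x y : S) (n : ℕ) [NeZero n]

def auxPhi (g h : ZMod n × ZMod n) : K :=
  ω ^ (g.2.val * h.1.val) * ((if g.1.val + h.1.val < n then 1 else a) *
    (if g.2.val + h.2.val < n then 1 else b))

lemma aux_mul (hx : x ^ n = algebraMap K S a) (hy : y ^ n = algebraMap K S b)
    (hyx : y * x = ω • (x * y)) (c : ZMod n × ZMod n → S)
    (hc : ∀ g, c g = x ^ (g.1.val) * y ^ (g.2.val)) (g h : ZMod n × ZMod n) :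
    c g * c h = auxPhi ω a b n g h • c (g + h) := by
  obtain ⟨i, j⟩ := g
  obtain ⟨k, l⟩ := h
  have hi : i.val < n := ZMod.val_lt i
  have hk : k.val < n := ZMod.val_lt k
  have hj : j.val < n := ZMod.val_lt j
  have hl : l.val < n := ZMod.val_lt l
  rw [hc, hc, hc]
  calc (x ^ i.val * y ^ j.val) * (x ^ k.val * y ^ l.val)
      = x ^ i.val * ((y ^ j.val * x ^ k.val) * y ^ l.val) := by
        rw [mul_assoc, ← mul_assoc (y ^ j.val)]
    _ = x ^ i.val * ((ω ^ (j.val * k.val) • (x ^ k.val * y ^ j.val)) * y ^ l.val) := by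
        rw [aux_ypow_xpow ω x y hyx]
    _ = ω ^ (j.val * k.val) • ((x ^ i.val * x ^ k.val) * (y ^ j.val * y ^ l.val)) := by
        rw [smul_mul_assoc, mul_smul_comm, mul_assoc (x ^ k.val), ← mul_assoc (x ^ i.val)]
    _ = ω ^ (j.val * k.val) • (((if i.val + k.val < n then (1:K) else a) • x ^ ((i.val + k.val) % n)) *
          ((if j.val + l.val < n then (1:K) else b) • y ^ ((j.val + l.val) % n))) := by
        rw [aux_pow_reduce a x n hx hi hk, aux_pow_reduce b y n hy hj hl]
    _ = auxPhi ω a b n (i, j) (k, l) • (x ^ (((i, j) + (k, l)).1.val) * y ^ (((i, j) + (k, l)).2.val)) := by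
        rw [smul_mul_assoc, mul_smul_comm, smul_smul, smul_smul]
        simp only [auxPhi, Prod.fst_add, Prod.snd_add, ZMod.val_add]
        congr 1
        ring

lemma auxPhi_ne_zero (hω : ω ≠ 0) (ha : a ≠ 0) (hb : b ≠ 0) (g h : ZMod n × ZMod n) :
    auxPhi ω a b n g h ≠ 0 := by
  unfold auxPhi
  split_ifs <;> simp [hω, ha, hb, pow_ne_zero]

lemma auxPhi_zero_left (g : ZMod n × ZMod n) : auxPhi ω a b n 0 g = 1 := by
  unfold auxPhi
  simp [ZMod.val_lt]

end Mul

section Trace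
variable {K : Type*} [Field K] {S : Type*} [Ring S] [Algebra K S]
variable (ω a b : K) (n : ℕ) [NeZero n]

lemma aux_trace (c : Module.Basis (ZMod n × ZMod n) K S)
    (hmul : ∀ g h, c g * c h = auxPhi ω a b n g h • c (g + h)) (g : ZMod n × ZMod n) :
    LinearMap.trace K S (LinearMap.mulLeft K (c g)) = if g = 0 then (n : K)^2 else 0 := by
  rw [LinearMap.trace_eq_matrix_trace K c, Matrix.trace]
  have : ∀ h, ((LinearMap.toMatrix c c) (LinearMap.mulLeft K (c g))).diag h
      = auxPhi ω a b n g h * (if g = 0 then 1 else 0) := by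
    intro h
    rw [Matrix.diag_apply, LinearMap.toMatrix_apply, LinearMap.mulLeft_apply, hmul,
      map_smul, Module.Basis.repr_self]
    simp only [Finsupp.smul_apply, Finsupp.single_apply, smul_eq_mul]
    congr 1
    simp [add_eq_right]
  simp only [this]
  split_ifs with hg
  · subst hg
    simp only [auxPhi_zero_left, mul_one]
    rw [Finset.sum_const, Finset.card_univ]
    simp [Fintype.card_prod, ZMod.card, sq, mul_comm]
  · simp

lemma aux_symm (u v : S) :
    LinearMap.trace K S (LinearMap.mulLeft K (u * v)) =
      LinearMap.trace K S (LinearMap.mulLeft K (v * u)) := by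
  rw [LinearMap.mulLeft_mul, LinearMap.mulLeft_mul, ← Module.End.mul_eq_comp,
    ← Module.End.mul_eq_comp, LinearMap.trace_mul_comm]

lemma aux_expand {I : Type*} [Fintype I] [DecidableEq I] (c : Module.Basis I K S) (z : S) :
    LinearMap.trace K S (LinearMap.mulLeft K (z * z)) =
      ∑ i, ∑ i', (c.repr z i) * (c.repr z i') *
        LinearMap.trace K S (LinearMap.mulLeft K (c i * c i')) := by
  set T : S →ₗ[K] K := (LinearMap.trace K S) ∘ₗ (LinearMap.mul K S) with hT
  have hTapp : ∀ s : S, T s = LinearMap.trace K S (LinearMap.mulLeft K s) := by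
    intro s
    rw [hT]
    simp only [LinearMap.comp_apply]
    congr 1
  have main : T (z * z) = ∑ i, ∑ i', (c.repr z i) * (c.repr z i') * T (c i * c i') := by
    conv_lhs => rw [← c.sum_repr z]
    rw [Finset.sum_mul_sum]
    simp only [smul_mul_assoc, mul_smul_comm, map_sum, map_smul, smul_smul, smul_eq_mul]
    rw [Finset.sum_comm]
    refine Finset.sum_congr rfl fun i _ => Finset.sum_congr rfl fun i' _ => ?_
    rw [hTapp, hTapp, aux_symm]
  simpa only [hTapp] using main

end Trace


section Comb
variable (n h : ℕ) [NeZero n]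

def auxF (k : ℕ) : ZMod n × ZMod n :=
  if k < h * n then (((k / n + 1 : ℕ) : ZMod n), ((k % n : ℕ) : ZMod n))
  else (0, ((k - h * n + 1 : ℕ) : ZMod n))

def auxPos (g : ZMod n × ZMod n) : Prop :=
  (1 ≤ g.1.val ∧ g.1.val ≤ h) ∨ (g.1 = 0 ∧ 1 ≤ g.2.val ∧ g.2.val ≤ h)

variable (hn : n = 2 * h + 1)

include hn

lemma auxF_pos {k : ℕ} (hk : k < h * n + h) : auxPos n h (auxF n h k) := by
  have hn0 : 0 < n := by omega
  have hcm : h * n = n * h := Nat.mul_comm h n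
  unfold auxF auxPos
  split_ifs with hc
  · left
    have hdiv : k / n < h := Nat.div_lt_of_lt_mul (by omega)
    have : ((k / n + 1 : ℕ) : ZMod n).val = k / n + 1 := ZMod.val_cast_of_lt (by omega)
    simp only [this]
    exact ⟨Nat.le_add_left 1 _, hdiv⟩
  · right
    have hlt : k - h * n + 1 < n := by omega
    have : ((k - h * n + 1 : ℕ) : ZMod n).val = k - h * n + 1 := ZMod.val_cast_of_lt hlt
    simp only [this]
    exact ⟨trivial, Nat.le_add_left 1 _, by omega⟩

omit hn in
lemma auxPos_ne_zero {g : ZMod n × ZMod n} (hg : auxPos n h g) : g ≠ 0 := by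
  rintro rfl
  unfold auxPos at hg
  simp only [Prod.fst_zero, Prod.snd_zero, ZMod.val_zero] at hg
  rcases hg with ⟨h1, _⟩ | ⟨_, h1, _⟩ <;> omega

lemma auxPos_neg {g : ZMod n × ZMod n} (hg : auxPos n h g) : ¬ auxPos n h (-g) := by
  unfold auxPos at *
  rcases hg with ⟨h1, h2⟩ | ⟨h1, h2, h3⟩
  · have hne : g.1 ≠ 0 := fun hz => by rw [hz, ZMod.val_zero] at h1; omega
    have hval : (-g).1.val = n - g.1.val := by
      rw [Prod.fst_neg, ZMod.neg_val, if_neg hne]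
    have hv1 : g.1.val < n := ZMod.val_lt g.1
    rintro (⟨_, h4⟩ | ⟨h4, _⟩)
    · omega
    · rw [Prod.fst_neg, neg_eq_zero] at h4
      exact hne h4
  · have hne : g.2 ≠ 0 := fun hz => by rw [hz, ZMod.val_zero] at h2; omega
    have hval1 : (-g).1 = 0 := by rw [Prod.fst_neg, h1, neg_zero]
    have hval : (-g).2.val = n - g.2.val := by
      rw [Prod.snd_neg, ZMod.neg_val, if_neg hne]
    have hv2 : g.2.val < n := ZMod.val_lt g.2
    rintro (⟨h4, _⟩ | ⟨_, _, h5⟩)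
    · rw [hval1, ZMod.val_zero] at h4; omega
    · omega

lemma auxF_inj {k k' : ℕ} (hk : k < h * n + h) (hk' : k' < h * n + h)
    (heq : auxF n h k = auxF n h k') : k = k' := by
  have hn0 : 0 < n := by omega
  have hcm : h * n = n * h := Nat.mul_comm h n
  unfold auxF at heq
  have hvd : ∀ j : ℕ, j < h * n → ((j / n + 1 : ℕ) : ZMod n).val = j / n + 1 := by
    intro j hj
    have : j / n < h := Nat.div_lt_of_lt_mul (by omega)
    exact ZMod.val_cast_of_lt (by omega)
  have hvm : ∀ j : ℕ, ((j % n : ℕ) : ZMod n).val = j % n :=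
    fun j => ZMod.val_cast_of_lt (Nat.mod_lt _ hn0)
  have hvs : ∀ j : ℕ, j < h * n + h → ¬ j < h * n →
      ((j - h * n + 1 : ℕ) : ZMod n).val = j - h * n + 1 :=
    fun j hj hj2 => ZMod.val_cast_of_lt (by omega)
  split_ifs at heq with h1 h2 h2 <;> rw [Prod.mk.injEq] at heq <;> obtain ⟨e1, e2⟩ := heq
  · have e1' : k / n + 1 = k' / n + 1 := by rw [← hvd k h1, ← hvd k' h2, e1]
    have e2' : k % n = k' % n := by rw [← hvm k, ← hvm k', e2]
    have d1 := Nat.div_add_mod k n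
    have d2 := Nat.div_add_mod k' n
    have e3 : n * (k / n) = n * (k' / n) := by rw [show k / n = k' / n by omega]
    omega
  · have := hvd k h1
    rw [e1, ZMod.val_zero] at this
    exact (Nat.succ_ne_zero _ this.symm).elim
  · have := hvd k' h2
    rw [← e1, ZMod.val_zero] at this
    exact (Nat.succ_ne_zero _ this.symm).elim
  · have := hvs k hk h1
    rw [e2, hvs k' hk' h2] at this
    omega

end Comb

section Equivs

lemma aux_equiv (n h : ℕ) [NeZero n] (hn : n = 2 * h + 1) :
    ∃ E : (Fin 1 ⊕ Fin (h * n + h) × Fin 2) ≃ (ZMod n × ZMod n),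
      E (Sum.inl 0) = 0 ∧
      (∀ k : Fin (h * n + h), E (Sum.inr (k, 0)) = auxF n h k ∧
        E (Sum.inr (k, 1)) = - auxF n h k) := by
  set m := h * n + h with hm
  set Efun : (Fin 1 ⊕ Fin m × Fin 2) → ZMod n × ZMod n :=
    fun i => match i with
      | .inl _ => 0
      | .inr (k, j) => if j = 0 then auxF n h k else - auxF n h k with hE
  have hfin2 : ∀ j : Fin 2, j ≠ 0 → j = 1 := by decide
  have hinj : Function.Injective Efun := by
    rintro (i | ⟨k, j⟩) (i' | ⟨k', j'⟩) heq
    · rw [Subsingleton.elim i i']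
    · exfalso
      simp only [hE] at heq
      split_ifs at heq
      · exact auxPos_ne_zero n h (auxF_pos n h hn k'.isLt) heq.symm
      · rw [eq_comm, neg_eq_zero] at heq
        exact auxPos_ne_zero n h (auxF_pos n h hn k'.isLt) heq
    · exfalso
      simp only [hE] at heq
      split_ifs at heq
      · exact auxPos_ne_zero n h (auxF_pos n h hn k.isLt) heq
      · rw [neg_eq_zero] at heq
        exact auxPos_ne_zero n h (auxF_pos n h hn k.isLt) heq
    · simp only [hE] at heq
      split_ifs at heq with hj hj' hj'
      · rw [hj, hj', Fin.ext (auxF_inj n h hn k.isLt k'.isLt heq)]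
      · exact absurd (heq ▸ auxF_pos n h hn k.isLt)
          (heq ▸ auxPos_neg n h hn (auxF_pos n h hn k'.isLt))
      · exact absurd (heq ▸ auxF_pos n h hn k'.isLt)
          (auxPos_neg n h hn (auxF_pos n h hn k.isLt))
      · rw [neg_inj] at heq
        rw [Fin.ext (auxF_inj n h hn k.isLt k'.isLt heq), hfin2 j hj, hfin2 j' hj']
  have hcard : Fintype.card (Fin 1 ⊕ Fin m × Fin 2) = Fintype.card (ZMod n × ZMod n) := by
    simp only [Fintype.card_sum, Fintype.card_prod, Fintype.card_fin, ZMod.card]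
    rw [hm, hn]
    ring
  have hbij : Function.Bijective Efun :=
    (Fintype.bijective_iff_injective_and_card Efun).mpr ⟨hinj, hcard⟩
  refine ⟨Equiv.ofBijective Efun hbij, rfl, fun k => ⟨?_, ?_⟩⟩
  · show Efun (Sum.inr (k, 0)) = _
    simp [hE]
  · show Efun (Sum.inr (k, 1)) = _
    simp [hE]

variable {K : Type*} [Field K]

lemma aux_block (m : ℕ) (β : Fin m → K) (hβ : ∀ k, β k ≠ 0) (h2 : (2 : K) ≠ 0) :
    ∃ E3 : ((Fin 1 ⊕ Fin m × Fin 2) → K) ≃ₗ[K] ((Fin 1 ⊕ Fin m × Fin 2) → K),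
      ∀ w : (Fin 1 ⊕ Fin m × Fin 2) → K,
        (∀ i0, E3 w (Sum.inl i0) = w (Sum.inl i0)) ∧
        ∀ k, E3 w (Sum.inr (k, 0)) = β k * w (Sum.inr (k, 0)) + 2⁻¹ * w (Sum.inr (k, 1)) ∧
          E3 w (Sum.inr (k, 1)) = β k * w (Sum.inr (k, 0)) - 2⁻¹ * w (Sum.inr (k, 1)) := by
  set T : ((Fin 1 ⊕ Fin m × Fin 2) → K) → ((Fin 1 ⊕ Fin m × Fin 2) → K) :=
    (fun w i => match i with
      | .inl i0 => w (.inl i0)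
      | .inr (k, j) => if j = 0 then β k * w (.inr (k, 0)) + 2⁻¹ * w (.inr (k, 1))
          else β k * w (.inr (k, 0)) - 2⁻¹ * w (.inr (k, 1))) with hT
  set Tinv : ((Fin 1 ⊕ Fin m × Fin 2) → K) → ((Fin 1 ⊕ Fin m × Fin 2) → K) :=
    (fun w i => match i with
      | .inl i0 => w (.inl i0)
      | .inr (k, j) => if j = 0 then (2 * β k)⁻¹ * (w (.inr (k, 0)) + w (.inr (k, 1)))
          else w (.inr (k, 0)) - w (.inr (k, 1))) with hTinv
  refine ⟨{ toFun := T, invFun := Tinv, map_add' := ?_, map_smul' := ?_,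
            left_inv := ?_, right_inv := ?_ }, ?_⟩
  · intro w w'
    funext i
    rcases i with i0 | ⟨k, j⟩
    · simp [hT]
    · simp only [hT, Pi.add_apply]
      split_ifs <;> ring
  · intro r w
    funext i
    rcases i with i0 | ⟨k, j⟩
    · simp [hT]
    · simp only [hT, Pi.smul_apply, smul_eq_mul, RingHom.id_apply]
      split_ifs <;> ring
  · intro w
    funext i
    rcases i with i0 | ⟨k, j⟩
    · simp [hT, hTinv]
    · fin_cases j
      · show (2 * β k)⁻¹ * (T w (.inr (k, 0)) + T w (.inr (k, 1))) = _
        show (2 * β k)⁻¹ * ((β k * w (.inr (k, 0)) + 2⁻¹ * w (.inr (k, 1))) +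
          (β k * w (.inr (k, 0)) - 2⁻¹ * w (.inr (k, 1)))) = w (.inr (k, 0))
        field_simp [hβ k]
        ring
      · show T w (.inr (k, 0)) - T w (.inr (k, 1)) = _
        show (β k * w (.inr (k, 0)) + 2⁻¹ * w (.inr (k, 1))) -
          (β k * w (.inr (k, 0)) - 2⁻¹ * w (.inr (k, 1))) = w (.inr (k, 1))
        field_simp [hβ k]
        ring
  · intro w
    funext i
    rcases i with i0 | ⟨k, j⟩
    · simp [hT, hTinv]
    · fin_cases j
      · show β k * (Tinv w (.inr (k, 0))) + 2⁻¹ * (Tinv w (.inr (k, 1))) = _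
        show β k * ((2 * β k)⁻¹ * (w (.inr (k, 0)) + w (.inr (k, 1)))) +
          2⁻¹ * (w (.inr (k, 0)) - w (.inr (k, 1))) = w (.inr (k, 0))
        field_simp [hβ k]
        ring
      · show β k * (Tinv w (.inr (k, 0))) - 2⁻¹ * (Tinv w (.inr (k, 1))) = _
        show β k * ((2 * β k)⁻¹ * (w (.inr (k, 0)) + w (.inr (k, 1)))) -
          2⁻¹ * (w (.inr (k, 0)) - w (.inr (k, 1))) = w (.inr (k, 1))
        field_simp [hβ k]
        ring
  · intro w
    exact ⟨fun i0 => rfl, fun k => ⟨by simp [hT], by simp [hT]⟩⟩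

end Equivs

/-- Trace form of a symbol algebra of odd degree `n`:
`T_S ≃ ⟨n⟩ ⊥ ((n²-1)/2) × ℍ`.  Here the symbol algebra `S = (a,b; n, K, ω)` is
presented as a `K`-algebra with generators `x, y` satisfying `xⁿ = a`, `yⁿ = b`,
`yx = ω·xy` and basis `{xⁱyʲ}`, and the trace form is
`z ↦ Trd_S(z²) = n⁻¹ · Tr(left multiplication by z²)`. -/
theorem traceForm_symbolAlgebra_odd (K : Type*) [Field K]
    (n : ℕ) (hpos : 0 < n) (hodd : Odd n)
    (hchar2 : ringChar K ≠ 2) (hcharn : ¬ ringChar K ∣ n)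
    (ω a b : K) (ha : a ≠ 0) (hb : b ≠ 0) (hω : IsPrimitiveRoot ω n)
    (S : Type*) [Ring S] [Algebra K S] (x y : S)
    (hx : x ^ n = algebraMap K S a) (hy : y ^ n = algebraMap K S b)
    (hyx : y * x = algebraMap K S ω * (x * y))
    (bS : Module.Basis (Fin n × Fin n) K S)
    (hbS : ∀ p : Fin n × Fin n, bS p = x ^ (p.1 : ℕ) * y ^ (p.2 : ℕ)) :
    ∃ e : S ≃ₗ[K] ((Fin 1 ⊕ Fin ((n ^ 2 - 1) / 2) × Fin 2) → K),
      ∀ z : S,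
        (n : K)⁻¹ * LinearMap.trace K S (LinearMap.mulLeft K (z * z)) =
          ∑ i, Sum.elim (fun _ : Fin 1 => (n : K))
            (fun p : Fin ((n ^ 2 - 1) / 2) × Fin 2 => if p.2 = 0 then (1 : K) else -1) i
            * (e z i) ^ 2 := by
  haveI : NeZero n := ⟨hpos.ne'⟩
  obtain ⟨h, hn⟩ : ∃ h, n = 2 * h + 1 := by obtain ⟨h, hh⟩ := hodd; exact ⟨h, by omega⟩
  -- replace (n^2-1)/2 by h*n+h
  have hm' : (n ^ 2 - 1) / 2 = h * n + h := by
    have e1 : n ^ 2 = 4 * (h * h) + 4 * h + 1 := by rw [hn]; ring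
    have e2 : h * n + h = 2 * (h * h) + 2 * h := by rw [hn]; ring
    rw [e1, e2]
    omega
  rw [hm']
  set m := h * n + h with hmdef
  -- basic nonvanishing
  have hnK : (n : K) ≠ 0 := fun hz => hcharn ((ringChar.spec K n).mp hz)
  have h2K : (2 : K) ≠ 0 := Ring.two_ne_zero hchar2
  have hωK : ω ≠ 0 := hω.ne_zero hpos.ne'
  -- the ZMod-indexed basis
  let ef : ZMod n ≃ Fin n :=
    { toFun := fun u => ⟨u.val, ZMod.val_lt u⟩
      invFun := fun i => ((i : ℕ) : ZMod n)
      left_inv := fun u => ZMod.natCast_rightInverse u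
      right_inv := fun i => Fin.ext (ZMod.val_cast_of_lt i.isLt) }
  let c : Module.Basis (ZMod n × ZMod n) K S := bS.reindex (ef.prodCongr ef).symm
  have hc : ∀ g : ZMod n × ZMod n, c g = x ^ (g.1.val) * y ^ (g.2.val) := by
    intro g
    rw [Module.Basis.reindex_apply, Equiv.symm_symm, hbS]
    rfl
  have hyx' : y * x = ω • (x * y) := by rw [Algebra.smul_def]; exact hyx
  have hmul : ∀ g h' : ZMod n × ZMod n,
      c g * c h' = auxPhi ω a b n g h' • c (g + h') := aux_mul ω a b x y n hx hy hyx' c hc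
  have htr : ∀ g, LinearMap.trace K S (LinearMap.mulLeft K (c g)) =
      if g = 0 then (n : K) ^ 2 else 0 := aux_trace ω a b n c hmul
  have hsm : ∀ (r : K) (s : S),
      LinearMap.mulLeft K (r • s) = r • LinearMap.mulLeft K s := by
    intro r s; ext t; simp [smul_mul_assoc]
  have htr2 : ∀ g h' : ZMod n × ZMod n,
      LinearMap.trace K S (LinearMap.mulLeft K (c g * c h')) =
        auxPhi ω a b n g h' * (if g + h' = 0 then (n : K) ^ 2 else 0) := by
    intro g h'
    rw [hmul, hsm, map_smul, smul_eq_mul, htr]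
  have hφne : ∀ g h', auxPhi ω a b n g h' ≠ 0 := auxPhi_ne_zero ω a b n hωK ha hb
  -- symmetry of auxPhi on (g, -g)
  have hφs : ∀ g, auxPhi ω a b n (-g) g = auxPhi ω a b n g (-g) := by
    intro g
    have t1 := aux_symm (K := K) (c g) (c (-g))
    rw [htr2, htr2, add_neg_cancel, neg_add_cancel, if_pos rfl] at t1
    have hn2 : ((n : K) ^ 2) ≠ 0 := pow_ne_zero _ hnK
    exact mul_right_cancel₀ hn2 t1.symm
  -- the combinatorial equivalence
  obtain ⟨E, hE0, hEk⟩ := aux_equiv n h hn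
  -- the diagonalizing coefficients
  set β : Fin m → K := fun k => (n : K) * auxPhi ω a b n (auxF n h k) (-(auxF n h k)) with hβdef
  have hβne : ∀ k, β k ≠ 0 := fun k => mul_ne_zero hnK (hφne _ _)
  obtain ⟨E3, hE3⟩ := aux_block m β hβne h2K
  -- the linear equivalence
  refine ⟨(c.equivFun.trans (LinearEquiv.funCongrLeft K K E)).trans E3, ?_⟩
  intro z
  set r : (ZMod n × ZMod n) → K := fun g => c.repr z g with hrdef
  set w : (Fin 1 ⊕ Fin m × Fin 2) → K := fun i => r (E i) with hwdef
  have hez : ∀ i, ((c.equivFun.trans (LinearEquiv.funCongrLeft K K E)).trans E3) z i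
      = E3 w i := by
    intro i
    simp only [LinearEquiv.trans_apply, LinearEquiv.funCongrLeft_apply, LinearMap.funLeft_apply]
    congr 1
  -- compute the LHS
  have step1 : ∀ g g' : ZMod n × ZMod n, r g * r g' *
      LinearMap.trace K S (LinearMap.mulLeft K (c g * c g')) =
      if g' = -g then r g * r (-g) * (auxPhi ω a b n g (-g) * (n : K) ^ 2) else 0 := by
    intro g g'
    rw [htr2]
    by_cases hgg : g' = -g
    · subst hgg
      rw [if_pos rfl, if_pos (add_neg_cancel g)]
    · rw [if_neg hgg, if_neg, mul_zero, mul_zero]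
      intro hz
      exact hgg (eq_neg_of_add_eq_zero_right hz)
  have L1 : (n : K)⁻¹ * LinearMap.trace K S (LinearMap.mulLeft K (z * z)) =
      (n : K)⁻¹ * ∑ g : ZMod n × ZMod n,
        r g * r (-g) * (auxPhi ω a b n g (-g) * (n : K) ^ 2) := by
    rw [aux_expand c z]
    congr 1
    refine Finset.sum_congr rfl fun g _ => ?_
    rw [Finset.sum_congr rfl fun g' _ => step1 g g', Finset.sum_ite_eq' Finset.univ (-g)]
    simp
  set F : (ZMod n × ZMod n) → K :=
    fun g => r g * r (-g) * (auxPhi ω a b n g (-g) * (n : K) ^ 2) with hFdef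
  have L2 : ∑ g : ZMod n × ZMod n, F g = F 0 + ∑ k : Fin m, (F (auxF n h k) + F (-(auxF n h k))) := by
    rw [← Equiv.sum_comp E F, Fintype.sum_sum_type, Fin.sum_univ_one, hE0,
      Fintype.sum_prod_type]
    congr 1
    refine Finset.sum_congr rfl fun k _ => ?_
    rw [Fin.sum_univ_two, (hEk k).1, (hEk k).2]
  -- compute the RHS
  have R1 : ∑ i, Sum.elim (fun _ : Fin 1 => (n : K))
      (fun p : Fin m × Fin 2 => if p.2 = 0 then (1 : K) else -1) i
        * (((c.equivFun.trans (LinearEquiv.funCongrLeft K K E)).trans E3) z i) ^ 2 =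
      (n : K) * (E3 w (Sum.inl 0)) ^ 2 +
        ∑ k : Fin m, ((E3 w (Sum.inr (k, 0))) ^ 2 - (E3 w (Sum.inr (k, 1))) ^ 2) := by
    simp only [hez]
    rw [Fintype.sum_sum_type, Fin.sum_univ_one, Fintype.sum_prod_type]
    simp only [Sum.elim_inl, Sum.elim_inr]
    congr 1
    refine Finset.sum_congr rfl fun k _ => ?_
    rw [Fin.sum_univ_two, if_pos rfl, if_neg (by decide : ((1 : Fin 2) = 0) → False)]
    ring
  rw [L1, L2, R1]
  -- final algebraic identity
  have hw0 : w (Sum.inl 0) = r 0 := by rw [hwdef]; simp [hE0]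
  have hwk0 : ∀ k, w (Sum.inr (k, 0)) = r (auxF n h k) := by
    intro k; rw [hwdef]; simp [(hEk k).1]
  have hwk1 : ∀ k, w (Sum.inr (k, 1)) = r (-(auxF n h k)) := by
    intro k; rw [hwdef]; simp [(hEk k).2]
  obtain ⟨hE3a, hE3b⟩ := hE3 w
  rw [mul_add, Finset.mul_sum, hE3a, hw0]
  congr 1
  · rw [hFdef]
    simp only [neg_zero, auxPhi_zero_left]
    field_simp
  refine Finset.sum_congr rfl fun k _ => ?_
  obtain ⟨hb0, hb1⟩ := hE3b k
  rw [hb0, hb1, hwk0, hwk1, hFdef]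
  simp only [neg_neg, hφs (auxF n h k), hβdef]
  field_simp
  ring
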